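/- Let G be a finite pyramidal group with |G| > 1, and let p be the largest prime divisor of |G|. Then G has a normal Sylow p-subgroup. -/

import Mathlib

/-- A finite group `G` is pyramidal if it has a chain `{e} = H_0 ≤ H_1 ≤ ⋯ ≤ H_n = G`
of subgroups in which every relative index `[H_i : H_{i-1}]` is prime and these prime
indices occur in non-ascending order. -/
def Pyramidal (G : Type*) [Group G] : Prop :=
  ∃ (n : ℕ) (f : Fin (n + 1) → Subgroup G),
    f 0 = ⊥ ∧ f (Fin.last n) = ⊤ ∧
    (∀ i : Fin n, f i.castSucc ≤ f i.succ ∧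
      ((f i.castSucc).relIndex (f i.succ)).Prime) ∧
    ∀ i j : Fin n, i ≤ j →
      (f j.castSucc).relIndex (f j.succ) ≤ (f i.castSucc).relIndex (f i.succ)

private lemma card_mul_relindex' {G : Type*} [Group G] (H K : Subgroup G) (h : H ≤ K) :
    Nat.card H * H.relIndex K = Nat.card K := by
  have e := Subgroup.card_mul_index (H.subgroupOf K)
  rwa [Nat.card_congr (Subgroup.subgroupOfEquivOfLe h).toEquiv] at e

/-- A subgroup whose index is a prime that is at most every prime divisor of `|G|` is normal. -/
private lemma normal_of_index_min' {G : Type*} [Group G] [Finite G] (H : Subgroup G)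
    (hq : H.index.Prime) (hmin : ∀ r : ℕ, r.Prime → r ∣ Nat.card G → H.index ≤ r) :
    H.Normal := by
  set q := H.index with hqdef
  have hq0 : 0 < q := hq.pos
  have hdvd : H.normalCore.index ∣ Nat.factorial q := by
    rw [Subgroup.normalCore_eq_ker, Subgroup.index_ker]
    have hfin : Nat.card (Equiv.Perm (G ⧸ H)) = Nat.factorial q := by
      have := Fintype.ofFinite (G ⧸ H)
      have := Classical.decEq (G ⧸ H)
      rw [hqdef, Subgroup.index, Nat.card_eq_fintype_card, Nat.card_eq_fintype_card,
        Fintype.card_perm]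
    exact hfin ▸ Subgroup.card_subgroup_dvd_card _
  have hKH : H.normalCore ≤ H := Subgroup.normalCore_le H
  have hrel : H.normalCore.relIndex H * q = H.normalCore.index :=
    Subgroup.relIndex_mul_index hKH
  set m := H.normalCore.relIndex H with hmdef
  have hm1 : m = 1 := by
    by_contra hm
    have hr := Nat.minFac_prime hm
    have hrm : m.minFac ∣ m := Nat.minFac_dvd m
    have hmf : m ∣ Nat.factorial (q - 1) := by
      have hfq : Nat.factorial q = Nat.factorial (q - 1) * q := by
        rcases Nat.exists_eq_succ_of_ne_zero hq0.ne' with ⟨t, ht⟩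
        rw [ht]
        simp [Nat.factorial_succ, mul_comm]
      have h2 : m * q ∣ Nat.factorial (q - 1) * q := by
        rw [← hfq, hrel]; exact hdvd
      exact (Nat.mul_dvd_mul_iff_right hq0).mp h2
    have hle : m.minFac ≤ q - 1 := (Nat.Prime.dvd_factorial hr).mp (hrm.trans hmf)
    have hmdvd : m ∣ H.normalCore.index := ⟨q, hrel.symm⟩
    have hge : q ≤ m.minFac :=
      hmin _ hr (hrm.trans (hmdvd.trans (Subgroup.index_dvd_card H.normalCore)))
    omega
  have hle : H ≤ H.normalCore := (Subgroup.relIndex_eq_one).mp hm1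
  have heq : H.normalCore = H := le_antisymm hKH hle
  rw [← heq]; infer_instance

private lemma chain_prod' {G : Type*} [Group G] [Finite G] {n : ℕ} {f : Fin (n + 1) → Subgroup G}
    (hf0 : f 0 = ⊥) (hfl : f (Fin.last n) = ⊤)
    (hstep : ∀ i : Fin n, f i.castSucc ≤ f i.succ) :
    Nat.card G = ∏ i : Fin n, (f i.castSucc).relIndex (f i.succ) := by
  have key : ∀ k : ℕ, ∀ hk : k ≤ n, Nat.card (f ⟨k, by omega⟩) =
      ∏ i ∈ Finset.range k, (if h : i < n then
        (f (Fin.castSucc ⟨i, h⟩)).relIndex (f (Fin.succ ⟨i, h⟩)) else 1) := by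
    intro k
    induction k with
    | zero =>
      intro _
      have h0 : (⟨0, by omega⟩ : Fin (n + 1)) = 0 := rfl
      simp [h0, hf0, Subgroup.card_bot]
    | succ k IH =>
      intro hk
      have hkn : k < n := hk
      rw [Finset.prod_range_succ, ← IH (le_of_lt hkn), dif_pos hkn]
      have h1 : Fin.castSucc (⟨k, hkn⟩ : Fin n) = (⟨k, by omega⟩ : Fin (n + 1)) := rfl
      have h2 : Fin.succ (⟨k, hkn⟩ : Fin n) = (⟨k + 1, by omega⟩ : Fin (n + 1)) := rfl
      rw [h1, h2]
      exact (card_mul_relindex' _ _ (h1 ▸ h2 ▸ hstep ⟨k, hkn⟩)).symm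
  have hkey := key n le_rfl
  have hlast : (⟨n, by omega⟩ : Fin (n + 1)) = Fin.last n := rfl
  rw [hlast, hfl, Subgroup.card_top] at hkey
  rw [hkey, Finset.prod_range fun i => _]
  exact Finset.prod_congr rfl fun i _ => by rw [dif_pos i.isLt]

universe u

private lemma pyramidal_aux : ∀ (N : ℕ) {G : Type u} [Group G] [Finite G], Nat.card G = N →
    Pyramidal G → ∀ p : ℕ, p.Prime → (∀ q : ℕ, q.Prime → q ∣ Nat.card G → q ≤ p) →
    ∃ P : Subgroup G, P.Normal ∧ Nat.card P = p ^ (Nat.card G).factorization p := by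
  intro N
  induction N using Nat.strong_induction_on with
  | _ N ih =>
  intro G _ _ hN hpyr p hp hmax
  obtain ⟨n, f, hf0, hfl, hstep, hmono⟩ := hpyr
  have hmonof : Monotone f := Fin.monotone_iff_le_succ.mpr fun i => (hstep i).1
  -- the product formula
  have hprod : Nat.card G = ∏ i : Fin n, (f i.castSucc).relIndex (f i.succ) :=
    chain_prod' hf0 hfl fun i => (hstep i).1
  -- every prime divisor of |G| is one of the chain indices
  have hfact : ∀ r : ℕ, r.Prime → r ∣ Nat.card G →
      ∃ i : Fin n, r = (f i.castSucc).relIndex (f i.succ) := by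
    intro r hr hrdvd
    rw [hprod] at hrdvd
    obtain ⟨i, -, hi⟩ := hr.prime.exists_mem_finset_dvd hrdvd
    exact ⟨i, ((Nat.prime_dvd_prime_iff_eq hr (hstep i).2).mp hi)⟩
  match n, f, hf0, hfl, hstep, hmono, hmonof, hprod, hfact with
  | 0, f, hf0, hfl, hstep, hmono, hmonof, hprod, hfact =>
    -- trivial group
    refine ⟨⊥, inferInstance, ?_⟩
    have h1 : Nat.card G = 1 := by simpa using hprod
    rw [h1, Nat.factorization_one]
    simp [Subgroup.card_bot]
  | m + 1, f, hf0, hfl, hstep, hmono, hmonof, hprod, hfact =>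
    set H : Subgroup G := f ((Fin.last m).castSucc) with hHdef
    have hHtop : f (Fin.last m).succ = ⊤ := by rw [Fin.succ_last, hfl]
    have hHq : H.relIndex ⊤ = H.index := Subgroup.relIndex_top_right _
    have hqidx : (f (Fin.last m).castSucc).relIndex (f (Fin.last m).succ) = H.index := by
      rw [hHtop, ← hHdef, hHq]
    have hqprime : H.index.Prime := hqidx ▸ (hstep (Fin.last m)).2
    -- H has minimal prime index
    have hHnormal : H.Normal := by
      refine normal_of_index_min' H hqprime fun r hr hrdvd => ?_
      obtain ⟨i, hi⟩ := hfact r hr hrdvd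
      rw [hi, ← hqidx]
      exact hmono i (Fin.last m) (Fin.le_last i)
    -- the pyramidal structure on H
    have hle2 : ∀ i : Fin (m + 1), f i.castSucc ≤ H :=
      fun i => hmonof (Fin.castSucc_le_castSucc_iff.mpr (Fin.le_last i))
    have hrelH : ∀ i : Fin m,
        ((f i.castSucc.castSucc).subgroupOf H).relIndex ((f i.succ.castSucc).subgroupOf H)
          = (f i.castSucc.castSucc).relIndex (f i.succ.castSucc) :=
      fun i => Subgroup.relIndex_subgroupOf (hle2 i.succ)
    have hpyrH : Pyramidal H := by
      refine ⟨m, fun j => (f j.castSucc).subgroupOf H, ?_, ?_, ?_, ?_⟩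
      · show (f ((0 : Fin (m + 1)).castSucc)).subgroupOf H = ⊥
        have h0 : ((0 : Fin (m + 1)).castSucc) = (0 : Fin (m + 2)) := rfl
        rw [h0, hf0, Subgroup.bot_subgroupOf]
      · show (f ((Fin.last m).castSucc)).subgroupOf H = ⊤
        exact Subgroup.subgroupOf_self H
      · intro i
        have hs := hstep i.castSucc
        rw [Fin.succ_castSucc] at hs
        constructor
        · exact Subgroup.comap_mono hs.1
        · show Nat.Prime (((f i.castSucc.castSucc).subgroupOf H).relIndex
            ((f i.succ.castSucc).subgroupOf H))
          rw [hrelH i]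
          exact hs.2
      · intro i j hij
        have hm2 := hmono i.castSucc j.castSucc (Fin.castSucc_le_castSucc_iff.mpr hij)
        rw [Fin.succ_castSucc, Fin.succ_castSucc] at hm2
        show ((f j.castSucc.castSucc).subgroupOf H).relIndex ((f j.succ.castSucc).subgroupOf H) ≤
          ((f i.castSucc.castSucc).subgroupOf H).relIndex ((f i.succ.castSucc).subgroupOf H)
        rw [hrelH i, hrelH j]
        exact hm2
    -- cardinalities
    have hcardmul : Nat.card H * H.index = Nat.card G := Subgroup.card_mul_index H
    have hHpos : 0 < Nat.card H := Nat.card_pos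
    have hlt : Nat.card H < N := by
      rw [← hN, ← hcardmul]
      have := hqprime.two_le
      nlinarith
    have hmaxH : ∀ q : ℕ, q.Prime → q ∣ Nat.card H → q ≤ p :=
      fun q hq hdq => hmax q hq (hdq.trans (Subgroup.card_subgroup_dvd_card H))
    obtain ⟨P', hP'norm, hP'card⟩ := ih (Nat.card H) hlt rfl hpyrH p hp hmaxH
    by_cases hqp : H.index = p
    · -- all chain indices equal p, G is a p-group; take ⊤
      have hall : ∀ i : Fin (m + 1), (f i.castSucc).relIndex (f i.succ) = p := by
        intro i
        have hcprime := (hstep i).2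
        have hcdvd : (f i.castSucc).relIndex (f i.succ) ∣ Nat.card G := by
          rw [hprod]
          exact Finset.dvd_prod_of_mem _ (Finset.mem_univ i)
        have hup : (f i.castSucc).relIndex (f i.succ) ≤ p := hmax _ hcprime hcdvd
        have hdown : p ≤ (f i.castSucc).relIndex (f i.succ) := by
          rw [← hqp, ← hqidx]
          exact hmono i (Fin.last m) (Fin.le_last i)
        omega
      have hcardG : Nat.card G = p ^ (m + 1) := by
        rw [hprod, Finset.prod_congr rfl fun i _ => hall i, Finset.prod_const,
          Finset.card_univ, Fintype.card_fin]
      refine ⟨⊤, inferInstance, ?_⟩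
      rw [Subgroup.card_top, hcardG, hp.factorization_pow, Finsupp.single_eq_same]
    · -- q ≠ p; lift P' from H to G
      have hqne : ¬ p ∣ H.index := fun hd =>
        hqp ((Nat.prime_dvd_prime_iff_eq hp hqprime).mp hd).symm
      have hfacteq : (Nat.card G).factorization p = (Nat.card H).factorization p := by
        rw [← hcardmul, Nat.factorization_mul hHpos.ne' hqprime.pos.ne', Finsupp.add_apply,
          Nat.factorization_eq_zero_of_not_dvd hqne, add_zero]
      haveI : Fact p.Prime := ⟨hp⟩
      -- P' is a Sylow p-subgroup of H, normal hence characteristic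
      let S : Sylow p H := Sylow.ofCard P' hP'card
      have hSnorm : (S : Subgroup H).Normal := by rwa [Sylow.coe_ofCard]
      haveI hchar : P'.Characteristic := by
        have := Sylow.characteristic_of_normal S hSnorm
        rwa [Sylow.coe_ofCard] at this
      haveI := hHnormal
      refine ⟨P'.map H.subtype, inferInstance, ?_⟩
      rw [← Nat.card_congr (Subgroup.equivMapOfInjective P' H.subtype
        (Subgroup.subtype_injective H)).toEquiv, hP'card, hfacteq]

theorem pyramidal_normal_sylow_of_max_prime {G : Type*} [Group G] [Finite G]
    (hG : 1 < Nat.card G) (hpyr : Pyramidal G) (p : ℕ) (hp : p.Prime)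
    (hdvd : p ∣ Nat.card G) (hmax : ∀ q : ℕ, q.Prime → q ∣ Nat.card G → q ≤ p) :
    ∃ P : Sylow p G, (P : Subgroup G).Normal := by
  obtain ⟨P, hPnorm, hPcard⟩ := pyramidal_aux (Nat.card G) rfl hpyr p hp hmax
  haveI : Fact p.Prime := ⟨hp⟩
  exact ⟨Sylow.ofCard P hPcard, by rwa [Sylow.coe_ofCard]⟩
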